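/- Let λ ∈ ℂ and let u : ℝ² → ℤ → ℂ be a smooth function of (x, t) satisfying, for all n: ∂ₓuₙ = uₙ(uₙ₊₁ − uₙ₋₁) and ∂ₜuₙ = uₙ(uₙ₊₁(uₙ₊₂ + uₙ₊₁ + uₙ) − uₙ₋₁(uₙ + uₙ₋₁ + uₙ₋₂)). Define U⁽¹⁾ₙ = [[uₙ, −uₙ], [λ, uₙ₋₁ − λ]] and U⁽²⁾ₙ = [[uₙ(λ + uₙ₊₁ + uₙ + uₙ₋₁), −uₙ(λ + uₙ₊₁ + uₙ)], [λ(λ + uₙ + uₙ₋₁), −λ² − λuₙ + uₙ₋₁(uₙ + uₙ₋₁ + uₙ₋₂)]]. Then for all n, x, t: ∂ₜU⁽¹⁾ₙ − ∂ₓU⁽²⁾ₙ = U⁽²⁾ₙU⁽¹⁾ₙ − U⁽¹⁾ₙU⁽²⁾ₙ. -/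

import Mathlib

attribute [local instance] Matrix.normedAddCommGroup Matrix.normedSpace

lemma hasDerivAt_mat2 {a b c d : ℝ → ℂ} {a' b' c' d' : ℂ} {x : ℝ}
    (ha : HasDerivAt a a' x) (hb : HasDerivAt b b' x)
    (hc : HasDerivAt c c' x) (hd : HasDerivAt d d' x) :
    HasDerivAt (fun s => !![a s, b s; c s, d s]) !![a', b'; c', d'] x := by
  refine hasDerivAt_pi.2 fun i => ?_
  fin_cases i <;> refine hasDerivAt_pi.2 fun j => ?_ <;> fin_cases j <;>
    simp only [Matrix.cons_val', Matrix.cons_val_zero, Matrix.cons_val_one, Matrix.head_cons,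
      Matrix.of_apply, Matrix.head_fin_const, Matrix.empty_val', Matrix.cons_val_fin_one] <;>
    assumption

/-- compatibility of the two zero curvature matrices of the
Volterra lattice: `∂ₜU⁽¹⁾ₙ − ∂ₓU⁽²⁾ₙ = [U⁽²⁾ₙ, U⁽¹⁾ₙ]`. -/
theorem volterra_U1_U2_compatibility
    (lam : ℂ) (u : ℝ → ℝ → ℤ → ℂ)
    (hx : ∀ (x t : ℝ) (n : ℤ), HasDerivAt (fun x => u x t n)
      (u x t n * (u x t (n + 1) - u x t (n - 1))) x)
    (ht : ∀ (x t : ℝ) (n : ℤ), HasDerivAt (fun t => u x t n)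
      (u x t n * (u x t (n + 1) * (u x t (n + 2) + u x t (n + 1) + u x t n)
        - u x t (n - 1) * (u x t n + u x t (n - 1) + u x t (n - 2)))) t)
    (U1 U2 : ℝ → ℝ → ℤ → Matrix (Fin 2) (Fin 2) ℂ)
    (hU1 : ∀ (x t : ℝ) (n : ℤ), U1 x t n =
      !![u x t n, -u x t n; lam, u x t (n - 1) - lam])
    (hU2 : ∀ (x t : ℝ) (n : ℤ), U2 x t n =
      !![u x t n * (lam + u x t (n + 1) + u x t n + u x t (n - 1)),
           -u x t n * (lam + u x t (n + 1) + u x t n);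
         lam * (lam + u x t n + u x t (n - 1)),
           -lam ^ 2 - lam * u x t n
             + u x t (n - 1) * (u x t n + u x t (n - 1) + u x t (n - 2))]) :
    ∀ (n : ℤ) (x t : ℝ),
      deriv (fun t => U1 x t n) t - deriv (fun x => U2 x t n) x
        = U2 x t n * U1 x t n - U1 x t n * U2 x t n := by
  intro n x t
  have e1 : n + 1 + 1 = n + 2 := by ring
  have e2 : n + 1 - 1 = n := by ring
  have e3 : n - 1 + 1 = n := by ring
  have e4 : n - 1 + 2 = n + 1 := by ring
  have e5 : n - 1 - 1 = n - 2 := by ring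
  have e6 : n - 1 - 2 = n - 3 := by ring
  have e7 : n - 2 + 1 = n - 1 := by ring
  have e8 : n - 2 - 1 = n - 3 := by ring
  have h0 := hx x t n
  have h1 := hx x t (n + 1); rw [e1, e2] at h1
  have hm1 := hx x t (n - 1); rw [e3, e5] at hm1
  have hm2 := hx x t (n - 2); rw [e7, e8] at hm2
  have k0 := ht x t n
  have km1 := ht x t (n - 1); rw [e3, e4, e5, e6] at km1
  have HU1 : (fun t => U1 x t n)
      = fun t => !![u x t n, -u x t n; lam, u x t (n - 1) - lam] :=
    funext fun t => hU1 x t n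
  have HU2 : (fun x => U2 x t n)
      = fun x => !![u x t n * (lam + u x t (n + 1) + u x t n + u x t (n - 1)),
           -u x t n * (lam + u x t (n + 1) + u x t n);
         lam * (lam + u x t n + u x t (n - 1)),
           -lam ^ 2 - lam * u x t n
             + u x t (n - 1) * (u x t n + u x t (n - 1) + u x t (n - 2))] :=
    funext fun x => hU2 x t n
  have HT : HasDerivAt (fun t => U1 x t n)
      !![u x t n * (u x t (n + 1) * (u x t (n + 2) + u x t (n + 1) + u x t n)
            - u x t (n - 1) * (u x t n + u x t (n - 1) + u x t (n - 2))),
         -(u x t n * (u x t (n + 1) * (u x t (n + 2) + u x t (n + 1) + u x t n)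
            - u x t (n - 1) * (u x t n + u x t (n - 1) + u x t (n - 2))));
         0,
         u x t (n - 1) * (u x t n * (u x t (n + 1) + u x t n + u x t (n - 1))
            - u x t (n - 2) * (u x t (n - 1) + u x t (n - 2) + u x t (n - 3)))] t := by
    rw [HU1]
    exact hasDerivAt_mat2 k0 k0.neg (hasDerivAt_const t lam) (km1.sub_const lam)
  have HX : HasDerivAt (fun x => U2 x t n)
      !![(u x t n * (u x t (n + 1) - u x t (n - 1)))
            * (lam + u x t (n + 1) + u x t n + u x t (n - 1))
          + u x t n * ((0 + u x t (n + 1) * (u x t (n + 2) - u x t n)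
              + u x t n * (u x t (n + 1) - u x t (n - 1)))
              + u x t (n - 1) * (u x t n - u x t (n - 2))),
         -(u x t n * (u x t (n + 1) - u x t (n - 1)))
            * (lam + u x t (n + 1) + u x t n)
          + -u x t n * (0 + u x t (n + 1) * (u x t (n + 2) - u x t n)
              + u x t n * (u x t (n + 1) - u x t (n - 1)));
         lam * (0 + u x t n * (u x t (n + 1) - u x t (n - 1))
              + u x t (n - 1) * (u x t n - u x t (n - 2))),
         -(lam * (u x t n * (u x t (n + 1) - u x t (n - 1))))
          + ((u x t (n - 1) * (u x t n - u x t (n - 2)))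
              * (u x t n + u x t (n - 1) + u x t (n - 2))
            + u x t (n - 1) * ((u x t n * (u x t (n + 1) - u x t (n - 1))
              + u x t (n - 1) * (u x t n - u x t (n - 2)))
              + u x t (n - 2) * (u x t (n - 1) - u x t (n - 3))))] x := by
    rw [HU2]
    refine hasDerivAt_mat2 ?_ ?_ ?_ ?_
    · exact h0.mul ((((hasDerivAt_const x lam).add h1).add h0).add hm1)
    · exact (h0.neg.mul (((hasDerivAt_const x lam).add h1).add h0))
    · exact ((((hasDerivAt_const x lam).add h0).add hm1)).const_mul lam
    · exact ((h0.const_mul lam).const_sub (-lam ^ 2)).add (hm1.mul ((h0.add hm1).add hm2))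
  erw [HT.deriv, HX.deriv]; rw [hU1 x t n, hU2 x t n]
  ext i j
  fin_cases i <;> fin_cases j <;>
    simp [Matrix.mul_fin_two, Matrix.sub_apply] <;> ring
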